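/- Let α, σ, ξ be real numbers with 0 < α < 1, σ > 0 and ξ > 0. Then |Γ(σ+iξ) / Γ(σ+2α+iξ)| ≤ Γ(σ) / Γ(σ+2α), where on the left Γ is the complex Gamma function and |·| is the complex modulus, and on the right Γ is the real Gamma function. -/

import Mathlib

open Complex intervalIntegral MeasureTheory

/-- The complex beta integral with real arguments is the coercion of a real integral. -/
lemma betaIntegral_ofReal (u v : ℝ) :
    Complex.betaIntegral (u : ℂ) (v : ℂ) =
      ((∫ x : ℝ in (0:ℝ)..1, x ^ (u - 1) * (1 - x) ^ (v - 1) : ℝ) : ℂ) := by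
  rw [Complex.betaIntegral, ← intervalIntegral.integral_ofReal]
  apply intervalIntegral.integral_congr
  intro x hx
  rw [Set.uIcc_of_le (by norm_num : (0:ℝ) ≤ 1)] at hx
  obtain ⟨hx0, hx1⟩ := hx
  show _ = ((_ * _ : ℝ) : ℂ)
  rw [Complex.ofReal_mul, Complex.ofReal_cpow hx0, Complex.ofReal_cpow (by linarith : (0:ℝ) ≤ 1 - x)]
  push_cast
  ring

lemma real_beta_eval (u v : ℝ) (hu : 0 < u) (hv : 0 < v) :
    (∫ x : ℝ in (0:ℝ)..1, x ^ (u - 1) * (1 - x) ^ (v - 1) : ℝ) =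
      Real.Gamma u * Real.Gamma v / Real.Gamma (u + v) := by
  have h := Complex.Gamma_mul_Gamma_eq_betaIntegral
    (s := (u : ℂ)) (t := (v : ℂ)) (by simpa using hu) (by simpa using hv)
  rw [betaIntegral_ofReal] at h
  have huv : Real.Gamma (u + v) ≠ 0 := (Real.Gamma_pos_of_pos (by linarith)).ne'
  have key : ((Real.Gamma u * Real.Gamma v : ℝ) : ℂ) =
      ((Real.Gamma (u + v) * ∫ x : ℝ in (0:ℝ)..1, x ^ (u - 1) * (1 - x) ^ (v - 1) : ℝ) : ℂ) := by
    push_cast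
    rw [← Complex.Gamma_ofReal, ← Complex.Gamma_ofReal, ← Complex.Gamma_ofReal]
    push_cast
    exact h
  have h2 := Complex.ofReal_injective key
  field_simp
  linarith [h2]

/-- Bound on the modulus of the beta integral. -/
lemma abs_betaIntegral_le (σ' ξ v : ℝ) (hσ' : 0 < σ') (hv : 0 < v) :
    ‖Complex.betaIntegral ((σ' : ℂ) + Complex.I * ξ) (v : ℂ)‖ ≤
      ∫ x : ℝ in (0:ℝ)..1, x ^ (σ' - 1) * (1 - x) ^ (v - 1) := by
  rw [Complex.betaIntegral]
  calc ‖∫ x : ℝ in (0:ℝ)..1, (x:ℂ) ^ ((σ':ℂ) + Complex.I * ξ - 1) * (1 - (x:ℂ)) ^ ((v:ℂ) - 1)‖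
      ≤ ∫ x : ℝ in (0:ℝ)..1, ‖(x:ℂ) ^ ((σ':ℂ) + Complex.I * ξ - 1) * (1 - (x:ℂ)) ^ ((v:ℂ) - 1)‖ :=
        intervalIntegral.norm_integral_le_integral_norm (by norm_num)
    _ = ∫ x : ℝ in (0:ℝ)..1, x ^ (σ' - 1) * (1 - x) ^ (v - 1) := ?_
  apply intervalIntegral.integral_congr_ae
  have hmeas : (MeasureTheory.volume ({(1:ℝ)} : Set ℝ)) = 0 := by simp
  filter_upwards [MeasureTheory.compl_mem_ae_iff.mpr hmeas] with x hx1 hx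
  rw [Set.uIoc_of_le (by norm_num : (0:ℝ) ≤ 1)] at hx
  obtain ⟨hx0, hx1'⟩ := hx
  have hx1lt : x < 1 := lt_of_le_of_ne hx1' (by simpa using hx1)
  rw [norm_mul]
  have h1 : ‖((x:ℂ)) ^ ((σ':ℂ) + Complex.I * ξ - 1)‖ = x ^ (σ' - 1) := by
    rw [Complex.norm_cpow_eq_rpow_re_of_pos hx0]
    congr 1
    simp
  have h2 : ‖(1 - (x:ℂ)) ^ ((v:ℂ) - 1)‖ = (1 - x) ^ (v - 1) := by
    have : (1 - (x:ℂ)) = ((1 - x : ℝ) : ℂ) := by push_cast; ring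
    rw [this, Complex.norm_cpow_eq_rpow_re_of_pos (by linarith)]
    norm_num
  rw [h1, h2]

/-- For `0 < α < 1`, `σ > 0` and `ξ > 0`, the modulus of the ratio of complex Gamma values
`Γ(σ+iξ)/Γ(σ+2α+iξ)` is at most the real ratio `Γ(σ)/Γ(σ+2α)`. -/
theorem abs_Gamma_ratio_le
    (α σ ξ : ℝ) (hα : 0 < α) (hα' : α < 1) (hσ : 0 < σ) (hξ : 0 < ξ) :
    ‖Complex.Gamma ((σ : ℂ) + Complex.I * (ξ : ℂ)) /
        Complex.Gamma ((σ : ℂ) + 2 * (α : ℂ) + Complex.I * (ξ : ℂ))‖ ≤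
      Real.Gamma σ / Real.Gamma (σ + 2 * α) := by
  set s : ℂ := (σ : ℂ) + Complex.I * (ξ : ℂ) with hs_def
  set a : ℂ := ((2 * α : ℝ) : ℂ) with ha_def
  have hsre : 0 < s.re := by simp [hs_def]; exact hσ
  have hare : 0 < a.re := by simp [ha_def]; positivity
  have h2α : (0:ℝ) < 2 * α := by linarith
  have hΓa_pos : 0 < Real.Gamma (2 * α) := Real.Gamma_pos_of_pos h2α
  have hΓsa_pos : 0 < Real.Gamma (σ + 2 * α) := Real.Gamma_pos_of_pos (by linarith)
  have harg : (σ : ℂ) + 2 * (α : ℂ) + Complex.I * (ξ : ℂ) = s + a := by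
    rw [hs_def, ha_def]; push_cast; ring
  rw [harg]
  have hΓsa_ne : Complex.Gamma (s + a) ≠ 0 :=
    Complex.Gamma_ne_zero_of_re_pos (by simp [hs_def, ha_def]; positivity)
  have hΓa_ne : Complex.Gamma a ≠ 0 := Complex.Gamma_ne_zero_of_re_pos hare
  have hbeta := Complex.Gamma_mul_Gamma_eq_betaIntegral hsre hare
  have hratio : Complex.Gamma s / Complex.Gamma (s + a) =
      Complex.betaIntegral s a / Complex.Gamma a := by
    field_simp
    linear_combination hbeta
  rw [hratio, norm_div]
  have hΓa_abs : ‖Complex.Gamma a‖ = Real.Gamma (2 * α) := by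
    rw [ha_def, Complex.Gamma_ofReal, Complex.norm_real, Real.norm_eq_abs, abs_of_pos hΓa_pos]
  rw [hΓa_abs]
  have hb := abs_betaIntegral_le σ ξ (2 * α) hσ h2α
  rw [real_beta_eval σ (2 * α) hσ h2α] at hb
  have : ‖Complex.betaIntegral s a‖ ≤
      Real.Gamma σ * Real.Gamma (2 * α) / Real.Gamma (σ + 2 * α) := hb
  rw [div_le_div_iff₀ hΓa_pos hΓsa_pos] at *
  calc ‖Complex.betaIntegral s a‖ * Real.Gamma (σ + 2 * α)
      ≤ (Real.Gamma σ * Real.Gamma (2 * α) / Real.Gamma (σ + 2 * α)) * Real.Gamma (σ + 2 * α) := by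
        apply mul_le_mul_of_nonneg_right this hΓsa_pos.le
    _ = Real.Gamma σ * Real.Gamma (2 * α) := by field_simp
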